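/- Let T be nonexpansive with v = x_⋆ − T x_⋆ the infimal displacement vector, and let x^k be the Halpern iteration with λ_k = 1/(k+1). Then (‖x^k − T x^k‖ − ‖v‖)² ≤ (16/k²) ‖x^0 − x_⋆‖² for all k ≥ 1. -/

import Mathlib

def Nonexpansive {H : Type*} [NormedAddCommGroup H] (T : H → H) : Prop :=
  ∀ x y, ‖T x - T y‖ ≤ ‖x - y‖

section OHMAux

variable {H : Type*} [NormedAddCommGroup H] [InnerProductSpace ℝ H]

local notation "⟪" x ", " y "⟫" => @inner ℝ _ _ x y

lemma ohm_mono {T : H → H} (hT : Nonexpansive T) (a b : H) :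
    (0:ℝ) ≤ ⟪(a - T a) - (b - T b), a - b⟫ := by
  have h1 := hT a b
  have h2 := real_inner_le_norm (T a - T b) (a - b)
  have h3 : (a - T a) - (b - T b) = (a - b) - (T a - T b) := by abel
  rw [h3, inner_sub_left, real_inner_self_eq_norm_sq]
  nlinarith [norm_nonneg (a - b), norm_nonneg (T a - T b)]

lemma ohm_coco {T : H → H} (hT : Nonexpansive T) (a b : H) :
    ‖(a - T a) - (b - T b)‖ ^ 2 ≤ 2 * ⟪(a - T a) - (b - T b), a - b⟫ := by
  have h1 := hT a b
  have h3 : (a - T a) - (b - T b) = (a - b) - (T a - T b) := by abel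
  rw [h3, inner_sub_left, real_inner_self_eq_norm_sq, norm_sub_sq_real,
    real_inner_comm]
  nlinarith [norm_nonneg (a - b), norm_nonneg (T a - T b)]

lemma ohm_solv [CompleteSpace H] {T : H → H} (hT : Nonexpansive T) (lam : ℝ)
    (hlam : 0 < lam) (b : H) : ∃ x : H, x = (lam / (lam + 1)) • T x + b := by
  have hc0 : 0 ≤ lam / (lam + 1) := by positivity
  have hc1 : lam / (lam + 1) < 1 := by
    rw [div_lt_one (by linarith)]; linarith
  have hlip : LipschitzWith ⟨lam / (lam + 1), hc0⟩
      (fun x => (lam / (lam + 1)) • T x + b) := by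
    apply LipschitzWith.of_dist_le_mul
    intro x y
    simp only [dist_eq_norm, add_sub_add_right_eq_sub, ← smul_sub, norm_smul,
      Real.norm_eq_abs, abs_of_nonneg hc0]
    exact mul_le_mul_of_nonneg_left (hT x y) hc0
  have hcontr : ContractingWith ⟨lam / (lam + 1), hc0⟩
      (fun x => (lam / (lam + 1)) • T x + b) := ⟨by exact_mod_cast hc1, hlip⟩
  haveI : Nonempty H := ⟨0⟩
  exact ⟨_, (hcontr.fixedPoint_isFixedPt).symm⟩

set_option maxHeartbeats 1000000 in
lemma ohm_segment [CompleteSpace H] {T : H → H} (hT : Nonexpansive T)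
    (y1 y2 : H) (t : ℝ) (ht0 : 0 ≤ t) (ht1 : t ≤ 1) :
    t • (y1 - T y1) + (1 - t) • (y2 - T y2) ∈
      closure (Set.range fun z => z - T z) := by
  set w : H := t • (y1 - T y1) + (1 - t) • (y2 - T y2) with hw
  set yb : H := t • y1 + (1 - t) • y2 with hyb
  set A : H := (y2 - T y2) - (y1 - T y1) with hA
  set B : H := y2 - y1 with hB
  set C : ℝ := t * (1 - t) * ⟪A, B⟫ with hC
  have hCpos : 0 ≤ C := by
    have := ohm_mono hT y2 y1
    exact mul_nonneg (mul_nonneg ht0 (by linarith)) this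
  have hex : ∀ n : ℕ, ∃ x : H, x = ((((n:ℝ)+1)) / (((n:ℝ)+1) + 1)) • T x +
      (((((n:ℝ)+1)) / (((n:ℝ)+1) + 1)) • w + (1 / (((n:ℝ)+1) + 1)) • yb) := by
    intro n
    exact ohm_solv hT ((n:ℝ)+1) (by positivity) _
  choose ξ hξ using hex
  -- key residual identity
  have key1 : ∀ n : ℕ, ξ n - T (ξ n) = w - (1/((n:ℝ)+1)) • (ξ n - yb) := by
    intro n
    have h := hξ n
    set l : ℝ := (n:ℝ)+1 with hl
    have hl0 : l ≠ 0 := by positivity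
    have hl1 : l + 1 ≠ 0 := by positivity
    nth_rewrite 1 [h]
    nth_rewrite 3 [h]
    match_scalars <;> field_simp <;> ring
  -- key estimate
  have key2 : ∀ n : ℕ, ⟪ξ n - yb, ξ n - yb⟫ ≤ ((n:ℝ)+1) * C := by
    intro n
    set l : ℝ := (n:ℝ)+1 with hldef
    have hl : (0:ℝ) < l := by positivity
    set u : H := ξ n - yb with hu
    have e1 : (ξ n - T (ξ n)) - (y1 - T y1) = (1-t) • A - (1/l) • u := by
      rw [key1 n, hA, hw, hu]; module
    have e2 : (ξ n - T (ξ n)) - (y2 - T y2) = (-t) • A - (1/l) • u := by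
      rw [key1 n, hA, hw, hu]; module
    have e1' : ξ n - y1 = u + (1-t) • B := by rw [hu, hB, hyb]; module
    have e2' : ξ n - y2 = u + (-t) • B := by rw [hu, hB, hyb]; module
    have h1 := ohm_mono hT (ξ n) y1
    have h2 := ohm_mono hT (ξ n) y2
    rw [e1, e1'] at h1
    rw [e2, e2'] at h2
    have hX : ⟪(1-t) • A - (1/l) • u, u + (1-t) • B⟫ =
        (1-t)*⟪A, u⟫ + (1-t)*(1-t)*⟪A, B⟫ - (1/l)*⟪u, u⟫ - ((1-t)/l)*⟪u, B⟫ := by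
      simp [inner_add_right, inner_sub_left, real_inner_smul_left,
        real_inner_smul_right]
      ring
    have hY : ⟪(-t) • A - (1/l) • u, u + (-t) • B⟫ =
        -t*⟪A, u⟫ + t*t*⟪A, B⟫ - (1/l)*⟪u, u⟫ + (t/l)*⟪u, B⟫ := by
      simp [inner_add_right, inner_sub_left, real_inner_smul_left,
        real_inner_smul_right]
      ring
    rw [hX] at h1
    rw [hY] at h2
    have c1 : 0 ≤ t * ((1-t)*⟪A, u⟫ + (1-t)*(1-t)*⟪A, B⟫ - (1/l)*⟪u, u⟫ - ((1-t)/l)*⟪u, B⟫) :=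
      mul_nonneg ht0 h1
    have c2 : 0 ≤ (1-t) * (-t*⟪A, u⟫ + t*t*⟪A, B⟫ - (1/l)*⟪u, u⟫ + (t/l)*⟪u, B⟫) :=
      mul_nonneg (by linarith) h2
    have hid : t * ((1-t)*⟪A, u⟫ + (1-t)*(1-t)*⟪A, B⟫ - (1/l)*⟪u, u⟫ - ((1-t)/l)*⟪u, B⟫)
        + (1-t) * (-t*⟪A, u⟫ + t*t*⟪A, B⟫ - (1/l)*⟪u, u⟫ + (t/l)*⟪u, B⟫)
        = t*(1-t)*⟪A, B⟫ - (1/l)*⟪u, u⟫ := by ring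
    have hsum : (1/l)*⟪u, u⟫ ≤ t*(1-t)*⟪A, B⟫ := by linarith [c1, c2, hid]
    have := mul_le_mul_of_nonneg_left hsum (le_of_lt hl)
    calc ⟪u, u⟫ = l * ((1/l) * ⟪u, u⟫) := by field_simp
    _ ≤ l * (t*(1-t)*⟪A, B⟫) := this
    _ = l * C := by rw [hC]
  -- convergence
  have hnorm : ∀ n : ℕ, ‖(ξ n - T (ξ n)) - w‖ ≤ Real.sqrt (C / ((n:ℝ)+1)) := by
    intro n
    set l : ℝ := (n:ℝ)+1 with hldef
    have hl : (0:ℝ) < l := by positivity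
    have e : (ξ n - T (ξ n)) - w = -((1/l) • (ξ n - yb)) := by
      rw [key1 n]; module
    rw [e, norm_neg, norm_smul, Real.norm_eq_abs, abs_of_pos (by positivity :
      (0:ℝ) < 1/l)]
    rw [← Real.sqrt_sq (by positivity : (0:ℝ) ≤ (1/l) * ‖ξ n - yb‖)]
    apply Real.sqrt_le_sqrt
    have h2 := key2 n
    rw [real_inner_self_eq_norm_sq] at h2
    rw [div_eq_mul_one_div C l, mul_comm C (1/l)]
    calc ((1/l) * ‖ξ n - yb‖)^2 = (1/l) * ((1/l) * ‖ξ n - yb‖^2) := by ring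
    _ ≤ (1/l) * ((1/l) * (l * C)) := by
        apply mul_le_mul_of_nonneg_left _ (by positivity)
        exact mul_le_mul_of_nonneg_left h2 (by positivity)
    _ = (1/l) * C := by field_simp
  have htend0 : Filter.Tendsto (fun n : ℕ => Real.sqrt (C / ((n:ℝ)+1)))
      Filter.atTop (nhds 0) := by
    have hl : Filter.Tendsto (fun n : ℕ => ((n:ℝ)+1)) Filter.atTop Filter.atTop :=
      Filter.tendsto_atTop_add_const_right _ 1 tendsto_natCast_atTop_atTop
    have h1 : Filter.Tendsto (fun n : ℕ => C / ((n:ℝ)+1)) Filter.atTop (nhds 0) :=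
      Filter.Tendsto.div_atTop tendsto_const_nhds hl
    simpa using h1.sqrt
  have htends : Filter.Tendsto (fun n => ξ n - T (ξ n)) Filter.atTop (nhds w) := by
    rw [tendsto_iff_norm_sub_tendsto_zero]
    exact squeeze_zero (fun n => norm_nonneg _) hnorm htend0
  exact mem_closure_of_tendsto htends
    (Filter.Eventually.of_forall fun n => ⟨ξ n, rfl⟩)

lemma ohm_vmin [CompleteSpace H] {T : H → H} (hT : Nonexpansive T) {v : H}
    (hv : v ∈ closure (Set.range fun z => z - T z))
    (hvmin : ∀ w ∈ closure (Set.range fun z => z - T z), ‖v‖ ≤ ‖w‖) (z : H) :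
    ‖v‖ ^ 2 ≤ ⟪v, z - T z⟫ := by
  set w : H := z - T z with hwdef
  obtain ⟨u, hu, hulim⟩ := mem_closure_iff_seq_limit.mp hv
  have hseg : ∀ t : ℝ, 0 ≤ t → t ≤ 1 →
      t • w + (1-t) • v ∈ closure (Set.range fun z => z - T z) := by
    intro t h0 h1
    have hmem : ∀ n, t • w + (1-t) • (u n) ∈ closure (Set.range fun z => z - T z) := by
      intro n
      obtain ⟨y2, hy2⟩ := hu n
      rw [← hy2]
      exact ohm_segment hT z y2 t h0 h1
    have htd : Filter.Tendsto (fun n => t • w + (1-t) • u n) Filter.atTop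
        (nhds (t • w + (1-t) • v)) :=
      Filter.Tendsto.add tendsto_const_nhds (hulim.const_smul (1-t))
    exact isClosed_closure.mem_of_tendsto htd (Filter.Eventually.of_forall hmem)
  have hineq : ∀ t : ℝ, 0 < t → t ≤ 1 → 0 ≤ 2*⟪v, w - v⟫ + t*‖w - v‖^2 := by
    intro t h0 h1
    have h := hvmin _ (hseg t h0.le h1)
    have hid : t • w + (1-t) • v = v + t • (w - v) := by module
    rw [hid] at h
    have hsq : ‖v‖^2 ≤ ‖v + t • (w-v)‖^2 := by
      nlinarith [norm_nonneg (v + t • (w-v)), norm_nonneg v]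
    rw [norm_add_sq_real, real_inner_smul_right, norm_smul, Real.norm_eq_abs,
      abs_of_pos h0, mul_pow] at hsq
    have hX : 0 ≤ t * (2*⟪v, w - v⟫ + t*‖w - v‖^2) := by nlinarith [hsq]
    nlinarith [hX, h0, mul_pos h0 h0]
  have hfinal : 0 ≤ ⟪v, w - v⟫ := by
    by_contra hneg
    push_neg at hneg
    have hb : (0:ℝ) ≤ ‖w - v‖^2 := by positivity
    rcases eq_or_lt_of_le hb with hb0 | hbpos
    · have h := hineq 1 one_pos le_rfl
      rw [← hb0] at h
      linarith
    · set s : ℝ := min 1 (-⟪v, w - v⟫ / ‖w - v‖^2) with hs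
      have hs0 : 0 < s := lt_min one_pos (div_pos (neg_pos.mpr hneg) hbpos)
      have hs1 : s ≤ 1 := min_le_left _ _
      have h := hineq s hs0 hs1
      have h2 : s * ‖w - v‖^2 ≤ -⟪v, w - v⟫ := by
        calc s * ‖w - v‖^2 ≤ (-⟪v, w - v⟫ / ‖w - v‖^2) * ‖w - v‖^2 :=
              mul_le_mul_of_nonneg_right (min_le_right _ _) hb
        _ = -⟪v, w - v⟫ := by rw [div_mul_cancel₀ _ (ne_of_gt hbpos)]
      linarith
  have hexp : ⟪v, w - v⟫ = ⟪v, w⟫ - ‖v‖^2 := by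
    rw [inner_sub_right, real_inner_self_eq_norm_sq]
  linarith

lemma ohm_potential {T : H → H} (hT : Nonexpansive T) (x : ℕ → H)
    (hx : ∀ k : ℕ, x (k + 1) =
      (1 / ((k : ℝ) + 2)) • x 0 + (((k : ℝ) + 1) / ((k : ℝ) + 2)) • T (x k)) :
    ∀ k : ℕ, ((k:ℝ)*((k:ℝ)+1)/2) * ‖x k - T (x k)‖^2
      + ((k:ℝ)+1) * ⟪x k - T (x k), x k - x 0⟫ ≤ 0 := by
  intro k
  induction k with
  | zero => simp
  | succ k ih =>
    have h2 : (0:ℝ) < (k:ℝ) + 2 := by positivity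
    have hrec1 : ((k:ℝ)+2) • (x (k+1) - x 0) =
        ((k:ℝ)+1) • ((x k - x 0) - (x k - T (x k))) := by
      rw [hx k]; match_scalars <;> field_simp <;> ring
    have hrec2 : ((k:ℝ)+2) • (x (k+1) - x k) =
        -(1:ℝ) • (x k - x 0) + (-((k:ℝ)+1)) • (x k - T (x k)) := by
      rw [hx k]; match_scalars <;> field_simp <;> ring
    have coco := ohm_coco hT (x (k+1)) (x k)
    obtain ⟨g, hgd⟩ : ∃ g : H, g = x k - T (x k) := ⟨_, rfl⟩
    obtain ⟨g', hgd'⟩ : ∃ g' : H, g' = x (k+1) - T (x (k+1)) := ⟨_, rfl⟩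
    obtain ⟨U, hUd⟩ : ∃ U : H, U = x k - x 0 := ⟨_, rfl⟩
    rw [← hgd, ← hUd] at ih hrec1 hrec2
    rw [← hgd, ← hgd'] at coco
    have e1 : ((k:ℝ)+2) * ⟪g', x (k+1) - x 0⟫ = ((k:ℝ)+1) * (⟪g', U⟫ - ⟪g', g⟫) := by
      rw [← real_inner_smul_right, hrec1, real_inner_smul_right, inner_sub_right]
    have e2 : ((k:ℝ)+2) * ⟪g' - g, x (k+1) - x k⟫ =
        -(1:ℝ) * (⟪g', U⟫ - ⟪g, U⟫) + (-((k:ℝ)+1)) * (⟪g', g⟫ - ⟪g, g⟫) := by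
      rw [← real_inner_smul_right, hrec2]
      simp only [inner_add_right, real_inner_smul_right, inner_sub_left]
      ring
    have e2' : ((k:ℝ)+1) * (((k:ℝ)+2) * ⟪g' - g, x (k+1) - x k⟫) =
        ((k:ℝ)+1) * (-(1:ℝ) * (⟪g', U⟫ - ⟪g, U⟫) + (-((k:ℝ)+1)) * (⟪g', g⟫ - ⟪g, g⟫)) := by
      rw [e2]
    have e3 : ‖g' - g‖^2 = ⟪g', g'⟫ - 2*⟪g', g⟫ + ⟪g, g⟫ := by
      rw [norm_sub_sq_real, real_inner_self_eq_norm_sq, real_inner_self_eq_norm_sq]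
    rw [e3] at coco
    have hc2 := mul_le_mul_of_nonneg_left coco
      (show (0:ℝ) ≤ ((k:ℝ)+1)*((k:ℝ)+2)/2 by positivity)
    have n1 : ‖g‖^2 = ⟪g, g⟫ := (real_inner_self_eq_norm_sq g).symm
    have n2 : ‖g'‖^2 = ⟪g', g'⟫ := (real_inner_self_eq_norm_sq g').symm
    rw [n1] at ih
    push_cast
    rw [← hgd', n2]
    nlinarith [ih, hc2, e1, e2']

lemma ohm_qbound [CompleteSpace H] {T : H → H} (hT : Nonexpansive T) {v xs : H}
    (hv : v ∈ closure (Set.range fun z => z - T z))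
    (hvmin : ∀ w ∈ closure (Set.range fun z => z - T z), ‖v‖ ≤ ‖w‖)
    (hxs : xs - T xs = v) (x : ℕ → H)
    (hx : ∀ k : ℕ, x (k + 1) =
      (1 / ((k : ℝ) + 2)) • x 0 + (((k : ℝ) + 1) / ((k : ℝ) + 2)) • T (x k)) :
    ∀ k : ℕ, ‖(x k - xs) + ((k:ℝ)/2) • v‖ ≤ ‖x 0 - xs‖ := by
  intro k
  induction k with
  | zero => simp
  | succ k ih =>
    have h2 : (0:ℝ) < (k:ℝ) + 2 := by positivity
    have hTxs : T xs = xs - v := by rw [← hxs]; abel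
    have hQrec : (x (k+1) - xs) + ((((k:ℕ)+1:ℕ):ℝ)/2) • v =
        (1/((k:ℝ)+2)) • (x 0 - xs)
          + (((k:ℝ)+1)/((k:ℝ)+2)) • ((T (x k) - T xs) + ((k:ℝ)/2) • v) := by
      push_cast
      rw [hx k, hTxs]
      match_scalars <;> field_simp <;> ring
    have hMle : ‖(T (x k) - T xs) + ((k:ℝ)/2) • v‖^2 ≤ ‖(x k - xs) + ((k:ℝ)/2) • v‖^2 := by
      rw [norm_add_sq_real, norm_add_sq_real, real_inner_smul_right, real_inner_smul_right]
      have hne : ‖T (x k) - T xs‖^2 ≤ ‖x k - xs‖^2 := by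
        nlinarith [hT (x k) xs, norm_nonneg (T (x k) - T xs), norm_nonneg (x k - xs)]
      have hP := ohm_vmin hT hv hvmin (x k)
      have hdiff : ⟪T (x k) - T xs, v⟫ - ⟪x k - xs, v⟫ = ‖v‖^2 - ⟪v, x k - T (x k)⟫ := by
        have hvec : (T (x k) - T xs) - (x k - xs) = v - (x k - T (x k)) := by
          rw [hTxs]; abel
        calc ⟪T (x k) - T xs, v⟫ - ⟪x k - xs, v⟫
            = ⟪(T (x k) - T xs) - (x k - xs), v⟫ := by simp [inner_sub_left]
        _ = ⟪v - (x k - T (x k)), v⟫ := by rw [hvec]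
        _ = ‖v‖^2 - ⟪v, x k - T (x k)⟫ := by
            rw [inner_sub_left, real_inner_self_eq_norm_sq,
              real_inner_comm (x k - T (x k)) v]
      have hk0 : (0:ℝ) ≤ (k:ℝ) := Nat.cast_nonneg k
      nlinarith [mul_nonneg hk0 (sub_nonneg.mpr hP), hne, hdiff]
    have hMle' : ‖(T (x k) - T xs) + ((k:ℝ)/2) • v‖ ≤ ‖(x k - xs) + ((k:ℝ)/2) • v‖ := by
      nlinarith [hMle, norm_nonneg ((T (x k) - T xs) + ((k:ℝ)/2) • v),
        norm_nonneg ((x k - xs) + ((k:ℝ)/2) • v)]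
    calc ‖(x (k+1) - xs) + ((((k:ℕ)+1:ℕ):ℝ)/2) • v‖
        = ‖(1/((k:ℝ)+2)) • (x 0 - xs)
            + (((k:ℝ)+1)/((k:ℝ)+2)) • ((T (x k) - T xs) + ((k:ℝ)/2) • v)‖ := by
          rw [hQrec]
    _ ≤ (1/((k:ℝ)+2)) * ‖x 0 - xs‖
          + (((k:ℝ)+1)/((k:ℝ)+2)) * ‖(T (x k) - T xs) + ((k:ℝ)/2) • v‖ := by
          refine (norm_add_le _ _).trans ?_
          rw [norm_smul, norm_smul, Real.norm_eq_abs, Real.norm_eq_abs,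
            abs_of_pos (by positivity), abs_of_pos (by positivity)]
    _ ≤ (1/((k:ℝ)+2)) * ‖x 0 - xs‖ + (((k:ℝ)+1)/((k:ℝ)+2)) * ‖x 0 - xs‖ := by
          have := hMle'.trans ih
          have hcoef : (0:ℝ) ≤ ((k:ℝ)+1)/((k:ℝ)+2) := by positivity
          nlinarith [mul_le_mul_of_nonneg_left this hcoef]
    _ = ‖x 0 - xs‖ := by field_simp; ring

end OHMAux

local notation "⟪" x ", " y "⟫" => @inner ℝ _ _ x y

/-- For the Halpern iteration with `λ_k = 1/(k+1)` (OHM), the norm of the fixed-point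
residual converges to `‖v‖` at rate `16/k²`. -/
theorem ohm_residual_norm_rate
    {H : Type*} [NormedAddCommGroup H] [InnerProductSpace ℝ H] [CompleteSpace H]
    (T : H → H) (hT : Nonexpansive T) (v xs : H)
    (hv : v ∈ closure (Set.range fun z => z - T z))
    (hvmin : ∀ w ∈ closure (Set.range fun z => z - T z), ‖v‖ ≤ ‖w‖)
    (hxs : xs - T xs = v)
    (x : ℕ → H)
    (hx : ∀ k : ℕ, x (k + 1) =
      (1 / ((k : ℝ) + 2)) • x 0 + (((k : ℝ) + 1) / ((k : ℝ) + 2)) • T (x k)) :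
    ∀ k : ℕ, 1 ≤ k →
      (‖x k - T (x k)‖ - ‖v‖) ^ 2 ≤ (16 / (k : ℝ) ^ 2) * ‖x 0 - xs‖ ^ 2 := by
  intro k hk
  have hκ1 : (1:ℝ) ≤ (k:ℝ) := by exact_mod_cast hk
  have hκ0 : (0:ℝ) < (k:ℝ) := by linarith
  have hD0 : (0:ℝ) ≤ ‖x 0 - xs‖ := norm_nonneg _
  -- lower bound
  have hlow : ‖v‖ ≤ ‖x k - T (x k)‖ :=
    hvmin _ (subset_closure ⟨x k, rfl⟩)
  by_cases hg0 : ‖x k - T (x k)‖ = 0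
  · have hv0 : ‖v‖ = 0 := le_antisymm (hg0 ▸ hlow) (norm_nonneg v)
    rw [hg0, hv0]
    norm_num
    positivity
  · have hgpos : 0 < ‖x k - T (x k)‖ := lt_of_le_of_ne (norm_nonneg _) (Ne.symm hg0)
    -- potential bound
    have hpot := ohm_potential hT x hx k
    -- distance bound
    have hq := ohm_qbound hT hv hvmin hxs x hx k
    have hxdist : ‖x 0 - x k‖ ≤ 2*‖x 0 - xs‖ + ((k:ℝ)/2)*‖v‖ := by
      have hdecomp : x 0 - x k = (x 0 - xs) - ((x k - xs) + (((k:ℝ)/2)) • v)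
          + (((k:ℝ)/2)) • v := by abel
      calc ‖x 0 - x k‖ ≤ ‖(x 0 - xs) - ((x k - xs) + (((k:ℝ)/2)) • v)‖
            + ‖(((k:ℝ)/2)) • v‖ := by rw [hdecomp]; exact norm_add_le _ _
      _ ≤ (‖x 0 - xs‖ + ‖(x k - xs) + (((k:ℝ)/2)) • v‖) + ‖(((k:ℝ)/2)) • v‖ := by
            have := norm_sub_le (x 0 - xs) ((x k - xs) + (((k:ℝ)/2)) • v)
            linarith
      _ ≤ (‖x 0 - xs‖ + ‖x 0 - xs‖) + ((k:ℝ)/2)*‖v‖ := by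
            rw [norm_smul, Real.norm_eq_abs, abs_of_pos (by positivity)]
            linarith [hq]
      _ = 2*‖x 0 - xs‖ + ((k:ℝ)/2)*‖v‖ := by ring
    -- combine
    have hip : ⟪x k - T (x k), x k - x 0⟫ = -⟪x k - T (x k), x 0 - x k⟫ := by
      rw [← inner_neg_right]; congr 1; abel
    have hcs : ⟪x k - T (x k), x 0 - x k⟫ ≤ ‖x k - T (x k)‖ * ‖x 0 - x k‖ :=
      real_inner_le_norm _ _
    rw [hip] at hpot
    -- (κ(κ+1)/2)‖g‖² ≤ (κ+1)‖g‖‖x0−xk‖ ≤ (κ+1)‖g‖(2D + (κ/2)‖v‖)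
    have hmain : ((k:ℝ)/2) * ‖x k - T (x k)‖^2
        ≤ ‖x k - T (x k)‖ * (2*‖x 0 - xs‖ + ((k:ℝ)/2)*‖v‖) := by
      have hmul : ((k:ℝ)+1) * ⟪x k - T (x k), x 0 - x k⟫
          ≤ ((k:ℝ)+1) * (‖x k - T (x k)‖ * (2*‖x 0 - xs‖ + ((k:ℝ)/2)*‖v‖)) := by
        apply mul_le_mul_of_nonneg_left _ (by positivity)
        exact hcs.trans (mul_le_mul_of_nonneg_left hxdist (norm_nonneg _))
      nlinarith [hpot, hmul, hgpos, norm_nonneg (x k - T (x k)), hκ0,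
        norm_nonneg v, hD0]
    have hstep : ‖x k - T (x k)‖ - ‖v‖ ≤ 4*‖x 0 - xs‖/(k:ℝ) := by
      rw [le_div_iff₀ hκ0]
      nlinarith [hmain, hgpos, hκ0]
    have hnn : 0 ≤ ‖x k - T (x k)‖ - ‖v‖ := sub_nonneg.mpr hlow
    calc (‖x k - T (x k)‖ - ‖v‖)^2 ≤ (4*‖x 0 - xs‖/(k:ℝ))^2 :=
          pow_le_pow_left₀ hnn hstep 2
    _ = (16 / (k:ℝ)^2) * ‖x 0 - xs‖^2 := by field_simp; ring
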